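/- Closed-form expansion of the Rule 54 partition function: For every integer k ≥ 1, the identity trace(T(ξ,ω)^k) = Σ_{x=0}^{k} Σ_{y=0}^{k} α_k(x,y)·ξ^x·ω^y holds as an identity of polynomials in ℤ[ξ,ω], where α_k(x,y) := (k(k+x+y)/((k+x−y)(k−x+y)))·C(k+x−y, y)·C(k−x+y, x) if k+x−y > 0 and k−x+y > 0, and α_k(x,y) := 0 otherwise (these rational expressions are integers), and T(ξ,ω) = [[1+ξω, ω, ξ],[1+ξ, ξω, ξ],[1+ω, ω, ξω]]. -/

import Mathlib

namespace Rule54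

/-- The Rule 54 Gibbs transfer matrix `T(ξ,ω)`. -/
noncomputable def T3 (ξ ω : ℂ) : Matrix (Fin 3) (Fin 3) ℂ :=
  !![1 + ξ * ω, ω, ξ; 1 + ξ, ξ * ω, ξ; 1 + ω, ω, ξ * ω]

/-- The coefficient `α_k(x,y)` of the Rule 54 partition function:
`α_k(x,y) = (k(k+x+y)/((k+x−y)(k−x+y)))·C(k+x−y, y)·C(k−x+y, x)` whenever
`k+x−y > 0` and `k−x+y > 0`, and `0` otherwise. -/
def alphaQ (k x y : ℕ) : ℚ :=
  if 0 < (k : ℤ) + x - y ∧ 0 < (k : ℤ) - x + y then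
    ((k : ℚ) * ((k : ℚ) + x + y))
        / ((((k : ℤ) + x - y : ℤ) : ℚ) * (((k : ℤ) - x + y : ℤ) : ℚ))
      * (Nat.choose ((k : ℤ) + x - y).toNat y : ℚ)
      * (Nat.choose ((k : ℤ) - x + y).toNat x : ℚ)
  else 0


def cc (n r : ℤ) : ℤ := if 0 ≤ r ∧ r ≤ n then ((n.toNat.choose r.toNat : ℕ) : ℤ) else 0

lemma cc_neg {n r : ℤ} (h : r < 0) : cc n r = 0 := by simp [cc]; omega

lemma cc_zero_of_lt {n r : ℤ} (h : n < r) : cc n r = 0 := by simp [cc]; omega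

lemma cc_natCast (a b : ℕ) : cc (a : ℤ) (b : ℤ) = (a.choose b : ℤ) := by
  by_cases h : b ≤ a
  · simp [cc, h]
  · rw [cc_zero_of_lt (by exact_mod_cast lt_of_not_ge h)]
    rw [Nat.choose_eq_zero_of_lt (by omega)]
    simp

lemma cc_pascal (n r : ℤ) (hn : 0 ≤ n) : cc (n+1) r = cc n r + cc n (r-1) := by
  rcases lt_or_ge r 0 with h | h
  · rw [cc_neg h, cc_neg h, cc_neg (by omega)]; ring
  rcases lt_or_ge r 1 with h1 | h1
  · have hr0 : r = 0 := by omega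
    subst hr0
    lift n to ℕ using hn
    rw [cc_neg (show (0:ℤ)-1 < 0 by norm_num)]
    rw [show ((n:ℤ)+1) = ((n+1 : ℕ) : ℤ) by push_cast; ring]
    rw [show (0:ℤ) = ((0:ℕ):ℤ) by simp, cc_natCast, cc_natCast]; simp
  · lift n to ℕ using hn
    obtain ⟨b, rfl⟩ : ∃ b : ℕ, r = (b:ℤ)+1 := ⟨(r-1).toNat, by omega⟩
    rw [show ((n:ℤ)+1) = ((n+1 : ℕ) : ℤ) by push_cast; ring,
        show ((b:ℤ)+1-1) = ((b : ℕ) : ℤ) by push_cast; ring,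
        show ((b:ℤ)+1) = ((b+1 : ℕ) : ℤ) by push_cast; ring,
        cc_natCast, cc_natCast, cc_natCast]
    rw [Nat.choose_succ_succ]
    push_cast; ring

lemma cc_mul (n r : ℤ) : n * cc (n-1) (r-1) = r * cc n r := by
  rcases lt_or_ge r 1 with h | h
  · rw [cc_neg (by omega)]
    rcases lt_or_ge r 0 with h0 | h0
    · rw [cc_neg h0]; ring
    · have : r = 0 := by omega
      subst this; ring
  rcases lt_or_ge n 1 with hn | hn
  · rw [cc_zero_of_lt (by omega), cc_zero_of_lt (by omega)]; ring
  obtain ⟨a, rfl⟩ : ∃ a : ℕ, n = (a:ℤ)+1 := ⟨(n-1).toNat, by omega⟩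
  obtain ⟨b, rfl⟩ : ∃ b : ℕ, r = (b:ℤ)+1 := ⟨(r-1).toNat, by omega⟩
  rw [show ((a:ℤ)+1-1) = ((a : ℕ) : ℤ) by push_cast; ring,
      show ((b:ℤ)+1-1) = ((b : ℕ) : ℤ) by push_cast; ring,
      show ((a:ℤ)+1) = ((a+1 : ℕ) : ℤ) by push_cast; ring,
      show ((b:ℤ)+1) = ((b+1 : ℕ) : ℤ) by push_cast; ring,
      cc_natCast, cc_natCast]
  have := Nat.add_one_mul_choose_eq a b
  push_cast
  push_cast at this
  linarith [this]

def betaA (a b x y : ℤ) : ℤ :=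
  cc a y * cc b x + cc a y * cc (b-1) (x-1) + cc b x * cc (a-1) (y-1)

def betaZ (k : ℕ) (x y : ℤ) : ℤ := betaA ((k:ℤ)+x-y) ((k:ℤ)-x+y) x y

lemma betaA_zero_xneg {a b : ℤ} {x : ℤ} (y : ℤ) (hx : x < 0) : betaA a b x y = 0 := by
  rw [betaA, cc_neg hx, cc_neg (show x-1 < 0 by omega)]; ring

lemma betaA_zero_yneg {a b : ℤ} (x : ℤ) {y : ℤ} (hy : y < 0) : betaA a b x y = 0 := by
  rw [betaA, cc_neg hy, cc_neg (show y-1 < 0 by omega)]; ring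

lemma betaZ_zero_left (m : ℕ) (x y : ℤ) (h : (m:ℤ) + x < 2*y) : betaZ m x y = 0 := by
  rw [betaZ, betaA, cc_zero_of_lt (show (m:ℤ)+x-y < y by omega),
      cc_zero_of_lt (show (m:ℤ)+x-y-1 < y-1 by omega)]; ring

lemma betaZ_zero_right (m : ℕ) (x y : ℤ) (h : (m:ℤ) + y < 2*x) : betaZ m x y = 0 := by
  rw [betaZ, betaA, cc_zero_of_lt (show (m:ℤ)-x+y < x by omega),
      cc_zero_of_lt (show (m:ℤ)-x+y-1 < x-1 by omega)]; ring

lemma betaZ_symm (k : ℕ) (x y : ℤ) : betaZ k x y = betaZ k y x := by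
  rw [betaZ, betaZ, show (k:ℤ)+y-x = (k:ℤ)-x+y by ring, show (k:ℤ)-y+x = (k:ℤ)+x-y by ring,
      betaA, betaA]; ring

lemma betaZ_zero_xbig (m : ℕ) (x y : ℤ) (hx : (m:ℤ) < x) (hy : 0 ≤ y) : betaZ m x y = 0 := by
  rcases lt_or_ge ((m:ℤ)+y) (2*x) with h | h
  · exact betaZ_zero_right m x y h
  · exact betaZ_zero_left m x y (by omega)

lemma keyA (A B x y : ℤ) (hA : 1 ≤ A) (hB : 1 ≤ B) :
    betaA (A+3) (B+3) x y
      = betaA (A+2) (B+2) x y + 3 * betaA (A+2) (B+2) (x-1) (y-1)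
        + betaA (A+1) (B+1) (x-1) (y-1) + (-3) * betaA (A+1) (B+1) (x-2) (y-2)
        + betaA A (B+2) (x-1) y + betaA (A+2) B x (y-1)
        + betaA A B (x-1) (y-1) + (-2) * betaA A B (x-2) (y-2) + betaA A B (x-3) (y-3) := by
  have h0 : ∀ r : ℤ, cc A r = cc (A-1) r + cc (A-1) (r-1) := by
    intro r; have := cc_pascal (A-1) r (by omega); rwa [sub_add_cancel] at this
  have h1 : ∀ r : ℤ, cc (A+1) r = cc A r + cc A (r-1) := fun r => cc_pascal A r (by omega)
  have h2 : ∀ r : ℤ, cc (A+2) r = cc (A+1) r + cc (A+1) (r-1) := by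
    intro r; have := cc_pascal (A+1) r (by omega)
    rwa [show A+1+1 = A+2 by ring] at this
  have h3 : ∀ r : ℤ, cc (A+3) r = cc (A+2) r + cc (A+2) (r-1) := by
    intro r; have := cc_pascal (A+2) r (by omega)
    rwa [show A+2+1 = A+3 by ring] at this
  have g0 : ∀ r : ℤ, cc B r = cc (B-1) r + cc (B-1) (r-1) := by
    intro r; have := cc_pascal (B-1) r (by omega); rwa [sub_add_cancel] at this
  have g1 : ∀ r : ℤ, cc (B+1) r = cc B r + cc B (r-1) := fun r => cc_pascal B r (by omega)
  have g2 : ∀ r : ℤ, cc (B+2) r = cc (B+1) r + cc (B+1) (r-1) := by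
    intro r; have := cc_pascal (B+1) r (by omega)
    rwa [show B+1+1 = B+2 by ring] at this
  have g3 : ∀ r : ℤ, cc (B+3) r = cc (B+2) r + cc (B+2) (r-1) := by
    intro r; have := cc_pascal (B+2) r (by omega)
    rwa [show B+2+1 = B+3 by ring] at this
  simp only [betaA,
    show A+3-1 = A+2 by ring, show A+2-1 = A+1 by ring, show A+1-1 = A by ring,
    show B+3-1 = B+2 by ring, show B+2-1 = B+1 by ring, show B+1-1 = B by ring,
    show ∀ t : ℤ, t-1-1 = t-2 from fun t => by ring,
    show ∀ t : ℤ, t-2-1 = t-3 from fun t => by ring,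
    show ∀ t : ℤ, t-3-1 = t-4 from fun t => by ring,
    h3, h2, h1, h0, g3, g2, g1, g0]
  ring

lemma key_aux (k : ℕ) (hk : 1 ≤ k) (x y : ℤ) (hA : (k:ℤ) + x - y ≤ 0) :
    betaZ (k+3) x y
      = betaZ (k+2) x y + 3 * betaZ (k+2) (x-1) (y-1)
        + betaZ (k+1) (x-1) (y-1) + (-3) * betaZ (k+1) (x-2) (y-2)
        + betaZ (k+1) (x-1) y + betaZ (k+1) x (y-1)
        + betaZ k (x-1) (y-1) + (-2) * betaZ k (x-2) (y-2) + betaZ k (x-3) (y-3) := by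
  rcases lt_or_ge x 0 with hx | hx
  · simp only [betaZ, betaA_zero_xneg _ hx,
      betaA_zero_xneg _ (show x-1 < 0 by omega), betaA_zero_xneg _ (show x-2 < 0 by omega),
      betaA_zero_xneg _ (show x-3 < 0 by omega)]
    ring
  rcases le_or_gt ((k:ℤ) + x + 4) (2*y) with hy2 | hy2
  · rw [betaZ_zero_left (k+3) x y (by push_cast; omega),
        betaZ_zero_left (k+2) x y (by push_cast; omega),
        betaZ_zero_left (k+2) (x-1) (y-1) (by push_cast; omega),
        betaZ_zero_left (k+1) (x-1) (y-1) (by push_cast; omega),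
        betaZ_zero_left (k+1) (x-2) (y-2) (by push_cast; omega),
        betaZ_zero_left (k+1) (x-1) y (by push_cast; omega),
        betaZ_zero_left (k+1) x (y-1) (by push_cast; omega),
        betaZ_zero_left k (x-1) (y-1) (by omega),
        betaZ_zero_left k (x-2) (y-2) (by omega),
        betaZ_zero_left k (x-3) (y-3) (by omega)]
    ring
  · -- finite region: k + x ≤ 3, 0 ≤ x, k+x ≤ y, 2y ≤ k+x+3
    have hkx : (k:ℤ) + x ≤ 3 := by omega
    have hk3 : k ≤ 3 := by omega
    interval_cases k
    · obtain ⟨x', rfl⟩ : ∃ x' : ℕ, x = (x' : ℤ) := ⟨x.toNat, by omega⟩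
      obtain ⟨y', rfl⟩ : ∃ y' : ℕ, y = (y' : ℤ) := ⟨y.toNat, by omega⟩
      have hx' : x' ≤ 2 := by omega
      have hy' : y' ≤ 3 := by omega
      interval_cases x' <;> interval_cases y' <;> decide
    · obtain ⟨x', rfl⟩ : ∃ x' : ℕ, x = (x' : ℤ) := ⟨x.toNat, by omega⟩
      obtain ⟨y', rfl⟩ : ∃ y' : ℕ, y = (y' : ℤ) := ⟨y.toNat, by omega⟩
      have hx' : x' ≤ 1 := by omega
      have hy' : y' ≤ 3 := by omega
      interval_cases x' <;> interval_cases y' <;> decide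
    · obtain ⟨x', rfl⟩ : ∃ x' : ℕ, x = (x' : ℤ) := ⟨x.toNat, by omega⟩
      obtain ⟨y', rfl⟩ : ∃ y' : ℕ, y = (y' : ℤ) := ⟨y.toNat, by omega⟩
      have hx' : x' ≤ 0 := by omega
      have hy' : y' ≤ 3 := by omega
      interval_cases x' <;> interval_cases y' <;> decide

lemma key (k : ℕ) (hk : 1 ≤ k) (x y : ℤ) :
    betaZ (k+3) x y
      = betaZ (k+2) x y + 3 * betaZ (k+2) (x-1) (y-1)
        + betaZ (k+1) (x-1) (y-1) + (-3) * betaZ (k+1) (x-2) (y-2)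
        + betaZ (k+1) (x-1) y + betaZ (k+1) x (y-1)
        + betaZ k (x-1) (y-1) + (-2) * betaZ k (x-2) (y-2) + betaZ k (x-3) (y-3) := by
  rcases le_or_gt ((k:ℤ) + x - y) 0 with hA | hA
  · exact key_aux k hk x y hA
  rcases le_or_gt ((k:ℤ) - x + y) 0 with hB | hB
  · have H := key_aux k hk y x (by omega)
    calc betaZ (k+3) x y = betaZ (k+3) y x := betaZ_symm _ _ _
      _ = betaZ (k+2) y x + 3 * betaZ (k+2) (y-1) (x-1)
        + betaZ (k+1) (y-1) (x-1) + (-3) * betaZ (k+1) (y-2) (x-2)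
        + betaZ (k+1) (y-1) x + betaZ (k+1) y (x-1)
        + betaZ k (y-1) (x-1) + (-2) * betaZ k (y-2) (x-2) + betaZ k (y-3) (x-3) := H
      _ = _ := by
          rw [betaZ_symm (k+2) y x, betaZ_symm (k+2) (y-1) (x-1),
              betaZ_symm (k+1) (y-1) (x-1), betaZ_symm (k+1) (y-2) (x-2),
              betaZ_symm (k+1) (y-1) x, betaZ_symm (k+1) y (x-1),
              betaZ_symm k (y-1) (x-1), betaZ_symm k (y-2) (x-2), betaZ_symm k (y-3) (x-3)]
          ring
  · set A : ℤ := (k:ℤ) + x - y with hA'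
    set B : ℤ := (k:ℤ) - x + y with hB'
    have E0 : betaZ (k+3) (x) (y) = betaA (A+3) (B+3) (x) (y) := by
      rw [betaZ, show (((k+3:ℕ)):ℤ) + (x) - (y) = A+3 by simp only [hA']; push_cast; ring,
          show (((k+3:ℕ)):ℤ) - (x) + (y) = B+3 by simp only [hB']; push_cast; ring]
    have E1 : betaZ (k+2) (x) (y) = betaA (A+2) (B+2) (x) (y) := by
      rw [betaZ, show (((k+2:ℕ)):ℤ) + (x) - (y) = A+2 by simp only [hA']; push_cast; ring,
          show (((k+2:ℕ)):ℤ) - (x) + (y) = B+2 by simp only [hB']; push_cast; ring]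
    have E2 : betaZ (k+2) (x-1) (y-1) = betaA (A+2) (B+2) (x-1) (y-1) := by
      rw [betaZ, show (((k+2:ℕ)):ℤ) + (x-1) - (y-1) = A+2 by simp only [hA']; push_cast; ring,
          show (((k+2:ℕ)):ℤ) - (x-1) + (y-1) = B+2 by simp only [hB']; push_cast; ring]
    have E3 : betaZ (k+1) (x-1) (y-1) = betaA (A+1) (B+1) (x-1) (y-1) := by
      rw [betaZ, show (((k+1:ℕ)):ℤ) + (x-1) - (y-1) = A+1 by simp only [hA']; push_cast; ring,
          show (((k+1:ℕ)):ℤ) - (x-1) + (y-1) = B+1 by simp only [hB']; push_cast; ring]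
    have E4 : betaZ (k+1) (x-2) (y-2) = betaA (A+1) (B+1) (x-2) (y-2) := by
      rw [betaZ, show (((k+1:ℕ)):ℤ) + (x-2) - (y-2) = A+1 by simp only [hA']; push_cast; ring,
          show (((k+1:ℕ)):ℤ) - (x-2) + (y-2) = B+1 by simp only [hB']; push_cast; ring]
    have E5 : betaZ (k+1) (x-1) (y) = betaA (A) (B+2) (x-1) (y) := by
      rw [betaZ, show (((k+1:ℕ)):ℤ) + (x-1) - (y) = A by simp only [hA']; push_cast; ring,
          show (((k+1:ℕ)):ℤ) - (x-1) + (y) = B+2 by simp only [hB']; push_cast; ring]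
    have E6 : betaZ (k+1) (x) (y-1) = betaA (A+2) (B) (x) (y-1) := by
      rw [betaZ, show (((k+1:ℕ)):ℤ) + (x) - (y-1) = A+2 by simp only [hA']; push_cast; ring,
          show (((k+1:ℕ)):ℤ) - (x) + (y-1) = B by simp only [hB']; push_cast; ring]
    have E7 : betaZ (k) (x-1) (y-1) = betaA (A) (B) (x-1) (y-1) := by
      rw [betaZ, show (((k:ℕ)):ℤ) + (x-1) - (y-1) = A by simp only [hA']; push_cast; ring,
          show (((k:ℕ)):ℤ) - (x-1) + (y-1) = B by simp only [hB']; push_cast; ring]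
    have E8 : betaZ (k) (x-2) (y-2) = betaA (A) (B) (x-2) (y-2) := by
      rw [betaZ, show (((k:ℕ)):ℤ) + (x-2) - (y-2) = A by simp only [hA']; push_cast; ring,
          show (((k:ℕ)):ℤ) - (x-2) + (y-2) = B by simp only [hB']; push_cast; ring]
    have E9 : betaZ (k) (x-3) (y-3) = betaA (A) (B) (x-3) (y-3) := by
      rw [betaZ, show (((k:ℕ)):ℤ) + (x-3) - (y-3) = A by simp only [hA']; push_cast; ring,
          show (((k:ℕ)):ℤ) - (x-3) + (y-3) = B by simp only [hB']; push_cast; ring]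
    rw [E0, E1, E2, E3, E4, E5, E6, E7, E8, E9]
    exact keyA A B x y (by omega) (by omega)

lemma betaZ_neg_x (m : ℕ) {x : ℤ} (y : ℤ) (hx : x < 0) : betaZ m x y = 0 :=
  betaA_zero_xneg _ hx

lemma betaZ_neg_y (m : ℕ) (x : ℤ) {y : ℤ} (hy : y < 0) : betaZ m x y = 0 :=
  betaA_zero_yneg _ hy

lemma betaZ_top_x (m : ℕ) {x : ℤ} (y : ℤ) (hx : (m:ℤ) < x) : betaZ m x y = 0 := by
  rcases lt_or_ge y 0 with hy | hy
  · exact betaZ_neg_y m x hy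
  · exact betaZ_zero_xbig m x y hx hy

lemma betaZ_top_y (m : ℕ) (x : ℤ) {y : ℤ} (hy : (m:ℤ) < y) : betaZ m x y = 0 := by
  rw [betaZ_symm]; exact betaZ_top_x m x hy

lemma cc_toNat {a : ℤ} (ha : 0 ≤ a) (y : ℕ) : cc a (y:ℤ) = (a.toNat.choose y : ℤ) := by
  have := cc_natCast a.toNat y
  rwa [Int.toNat_of_nonneg ha] at this

lemma alphaQ_eq_betaZ (k x y : ℕ) (hk : 1 ≤ k) :
    alphaQ k x y = ((betaZ k x y : ℤ) : ℚ) := by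
  rw [alphaQ]
  split_ifs with h
  · obtain ⟨h1, h2⟩ := h
    rw [betaZ, betaA]
    have hca : cc ((k:ℤ)+x-y) (y:ℤ) = (((k:ℤ)+x-y).toNat.choose y : ℤ) := cc_toNat (by omega) y
    have hcb : cc ((k:ℤ)-x+y) (x:ℤ) = (((k:ℤ)-x+y).toNat.choose x : ℤ) := cc_toNat (by omega) x
    have hmb : ((k:ℤ)-x+y) * cc ((k:ℤ)-x+y-1) ((x:ℤ)-1) = (x:ℤ) * cc ((k:ℤ)-x+y) x :=
      cc_mul _ _
    have hma : ((k:ℤ)+x-y) * cc ((k:ℤ)+x-y-1) ((y:ℤ)-1) = (y:ℤ) * cc ((k:ℤ)+x-y) y :=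
      cc_mul _ _
    have hQa : (((k:ℤ)+x-y : ℤ) : ℚ) ≠ 0 := by
      exact_mod_cast (by omega : ((k:ℤ)+x-y) ≠ 0)
    have hQb : (((k:ℤ)-x+y : ℤ) : ℚ) ≠ 0 := by
      exact_mod_cast (by omega : ((k:ℤ)-x+y) ≠ 0)
    -- cast the multiplicative identities to ℚ
    have hmbQ : (((k:ℤ)-x+y : ℤ) : ℚ) * ((cc ((k:ℤ)-x+y-1) ((x:ℤ)-1) : ℤ) : ℚ)
        = (x : ℚ) * ((cc ((k:ℤ)-x+y) (x:ℤ) : ℤ) : ℚ) := by exact_mod_cast hmb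
    have hmaQ : (((k:ℤ)+x-y : ℤ) : ℚ) * ((cc ((k:ℤ)+x-y-1) ((y:ℤ)-1) : ℤ) : ℚ)
        = (y : ℚ) * ((cc ((k:ℤ)+x-y) (y:ℤ) : ℤ) : ℚ) := by exact_mod_cast hma
    rw [div_mul_eq_mul_div, div_mul_eq_mul_div, div_eq_iff (mul_ne_zero hQa hQb)]
    push_cast [hca, hcb] at hmbQ hmaQ ⊢
    linear_combination
      (-((k:ℚ)+(x:ℚ)-(y:ℚ))) * ((((k:ℤ)+x-y).toNat.choose y : ℚ)) * hmbQ
      + (-((k:ℚ)-(x:ℚ)+(y:ℚ))) * ((((k:ℤ)-x+y).toNat.choose x : ℚ)) * hmaQ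
  · rcases (not_and_or.mp h) with ha | hb
    · have hz : betaZ k (x:ℤ) (y:ℤ) = 0 := by
        rw [betaZ, betaA, cc_zero_of_lt (show (k:ℤ)+x-y < y by omega),
            cc_zero_of_lt (show (k:ℤ)+x-y-1 < (y:ℤ)-1 by omega)]
        ring
      rw [hz]; simp
    · have hz : betaZ k (x:ℤ) (y:ℤ) = 0 := by
        rw [betaZ, betaA, cc_zero_of_lt (show (k:ℤ)-x+y < x by omega),
            cc_zero_of_lt (show (k:ℤ)-x+y-1 < (x:ℤ)-1 by omega)]
        ring
      rw [hz]; simp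

set_option maxHeartbeats 1000000 in
lemma T3_pow_three (ξ ω : ℂ) :
    T3 ξ ω ^ 3 = (1 + 3*(ξ*ω)) • (T3 ξ ω ^ 2)
      + (-(3*ξ^2*ω^2 - ξ*ω - ξ - ω)) • T3 ξ ω
      + (ξ*ω*(ξ*ω-1)^2) • (1 : Matrix (Fin 3) (Fin 3) ℂ) := by
  have h3 : T3 ξ ω ^ 3 = T3 ξ ω * T3 ξ ω * T3 ξ ω := by
    rw [pow_succ, pow_succ, pow_one]
  have h2 : T3 ξ ω ^ 2 = T3 ξ ω * T3 ξ ω := by rw [pow_two]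
  rw [h3, h2, T3, Matrix.mul_fin_three, Matrix.mul_fin_three, Matrix.one_fin_three]
  ext i j
  fin_cases i <;> fin_cases j <;>
    simp [Matrix.add_apply, Matrix.smul_apply, smul_eq_mul, Matrix.vecHead, Matrix.vecTail] <;> ring

lemma trace_rec (ξ ω : ℂ) (n : ℕ) :
    Matrix.trace (T3 ξ ω ^ (n+3))
      = (1 + 3*(ξ*ω)) * Matrix.trace (T3 ξ ω ^ (n+2))
        + (-(3*ξ^2*ω^2 - ξ*ω - ξ - ω)) * Matrix.trace (T3 ξ ω ^ (n+1))
        + (ξ*ω*(ξ*ω-1)^2) * Matrix.trace (T3 ξ ω ^ n) := by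
  have h : T3 ξ ω ^ (n+3) = T3 ξ ω ^ n * T3 ξ ω ^ 3 := by rw [← pow_add]
  rw [h, T3_pow_three, Matrix.mul_add, Matrix.mul_add, Matrix.mul_smul, Matrix.mul_smul,
      Matrix.mul_smul, Matrix.mul_one, ← pow_add, ← pow_succ,
      Matrix.trace_add, Matrix.trace_add, Matrix.trace_smul, Matrix.trace_smul,
      Matrix.trace_smul]
  simp only [smul_eq_mul]

open Finset in
lemma sum_shift (f : ℤ → ℂ) (m p R : ℕ) (ξ : ℂ)
    (hneg : ∀ n : ℤ, n < 0 → f n = 0) (htop : ∀ n : ℤ, (m:ℤ) < n → f n = 0)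
    (hR : m + p < R) :
    ∑ x ∈ range R, f ((x:ℤ) - (p:ℤ)) * ξ^x = ξ^p * ∑ x ∈ range R, f (x:ℤ) * ξ^x := by
  have h1 : ∑ x ∈ range R, f ((x:ℤ) - (p:ℤ)) * ξ^x
      = ∑ x ∈ Ico p R, f ((x:ℤ) - (p:ℤ)) * ξ^x := by
    refine (Finset.sum_subset (fun x hx => ?_) (fun x hx hnx => ?_)).symm
    · simp only [mem_Ico] at hx; simp only [mem_range]; omega
    · simp only [mem_range] at hx; simp only [mem_Ico, not_and, not_lt] at hnx
      rw [hneg _ (by have := hnx; omega), zero_mul]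
  have h2 : ∑ x ∈ Ico p R, f ((x:ℤ) - (p:ℤ)) * ξ^x
      = ∑ x ∈ range (R - p), f (x:ℤ) * (ξ^p * ξ^x) := by
    rw [Finset.sum_Ico_eq_sum_range]
    refine Finset.sum_congr rfl (fun x _ => ?_)
    rw [show ((p + x : ℕ):ℤ) - (p:ℤ) = (x:ℤ) by push_cast; ring, pow_add]
  have h3 : ∑ x ∈ range (R - p), f (x:ℤ) * (ξ^p * ξ^x)
      = ∑ x ∈ range R, f (x:ℤ) * (ξ^p * ξ^x) := by
    refine Finset.sum_subset (fun x hx => ?_) (fun x hx hnx => ?_)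
    · simp only [mem_range] at hx ⊢; omega
    · simp only [mem_range, not_lt] at hx hnx
      rw [htop _ (by exact_mod_cast (by omega : m < x)), zero_mul]
  rw [h1, h2, h3, Finset.mul_sum]
  refine Finset.sum_congr rfl (fun x _ => by ring)

noncomputable def S (m R : ℕ) (ξ ω : ℂ) : ℂ :=
  ∑ x ∈ Finset.range R, ∑ y ∈ Finset.range R, ((betaZ m (x:ℤ) (y:ℤ) : ℤ) : ℂ) * ξ^x * ω^y

open Finset in
lemma S_shift (m p q R : ℕ) (hp : m + p < R) (hq : m + q < R) (ξ ω : ℂ) :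
    ∑ x ∈ range R, ∑ y ∈ range R,
        ((betaZ m ((x:ℤ) - (p:ℤ)) ((y:ℤ) - (q:ℤ)) : ℤ) : ℂ) * ξ^x * ω^y
      = ξ^p * ω^q * S m R ξ ω := by
  set f : ℤ → ℂ := fun t => ∑ y ∈ range R, ((betaZ m t ((y:ℤ) - (q:ℤ)) : ℤ) : ℂ) * ω^y with hf
  set g : ℤ → ℂ := fun t => ∑ y ∈ range R, ((betaZ m t (y:ℤ) : ℤ) : ℂ) * ω^y with hg
  have hgf : ∀ t : ℤ, f t = ω^q * g t := by
    intro t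
    exact sum_shift (fun n => ((betaZ m t n : ℤ) : ℂ)) m q R ω
      (fun n hn => by rw [betaZ_neg_y m t hn]; simp)
      (fun n hn => by rw [betaZ_top_y m t hn]; simp) hq
  calc ∑ x ∈ range R, ∑ y ∈ range R,
        ((betaZ m ((x:ℤ) - (p:ℤ)) ((y:ℤ) - (q:ℤ)) : ℤ) : ℂ) * ξ^x * ω^y
      = ∑ x ∈ range R, f ((x:ℤ) - (p:ℤ)) * ξ^x := by
        refine Finset.sum_congr rfl (fun x _ => ?_)
        rw [hf, Finset.sum_mul]
        exact Finset.sum_congr rfl (fun y _ => by ring)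
    _ = ξ^p * ∑ x ∈ range R, f (x:ℤ) * ξ^x := by
        refine sum_shift f m p R ξ (fun n hn => ?_) (fun n hn => ?_) hp
        · rw [hf]; refine Finset.sum_eq_zero (fun y _ => ?_)
          rw [betaZ_neg_x m _ hn]; simp
        · rw [hf]; refine Finset.sum_eq_zero (fun y _ => ?_)
          rw [betaZ_top_x m _ hn]; simp
    _ = ξ^p * ∑ x ∈ range R, (ω^q * g (x:ℤ)) * ξ^x := by
        rw [Finset.sum_congr rfl (fun x _ => by rw [hgf])]
    _ = ξ^p * ω^q * S m R ξ ω := by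
        simp only [S, hg, Finset.mul_sum, Finset.sum_mul]
        refine Finset.sum_congr rfl (fun x _ => ?_)
        refine Finset.sum_congr rfl (fun y _ => by ring)

open Finset in
lemma S_trunc (m R : ℕ) (h : m < R) (ξ ω : ℂ) : S m R ξ ω = S m (m+1) ξ ω := by
  rw [S, S]
  have inner : ∀ x : ℕ, ∑ y ∈ range R, ((betaZ m (x:ℤ) (y:ℤ) : ℤ) : ℂ) * ξ^x * ω^y
      = ∑ y ∈ range (m+1), ((betaZ m (x:ℤ) (y:ℤ) : ℤ) : ℂ) * ξ^x * ω^y := by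
    intro x
    refine (Finset.sum_subset (fun y hy => ?_) (fun y hy hny => ?_)).symm
    · simp only [mem_range] at hy ⊢; omega
    · simp only [mem_range, not_lt] at hy hny
      rw [betaZ_top_y m _ (by exact_mod_cast (by omega : m < y))]
      simp
  rw [Finset.sum_congr rfl (fun x _ => inner x)]
  refine (Finset.sum_subset (fun x hx => ?_) (fun x hx hnx => ?_)).symm
  · simp only [mem_range] at hx ⊢; omega
  · simp only [mem_range, not_lt] at hx hnx
    refine Finset.sum_eq_zero (fun y _ => ?_)
    rw [betaZ_top_x m _ (by exact_mod_cast (by omega : m < x))]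
    simp

lemma base1 (ξ ω : ℂ) : Matrix.trace (T3 ξ ω ^ 1) = S 1 2 ξ ω := by
  have htr : T3 ξ ω ^ 1 = T3 ξ ω := by rw [pow_one]
  rw [htr, S]
  simp only [Finset.sum_range_succ, Finset.sum_range_zero, Nat.cast_zero, Nat.cast_one,
    Nat.cast_ofNat, show betaZ 1 0 0 = 1 by decide, show betaZ 1 0 1 = 0 by decide, show betaZ 1 1 0 = 0 by decide, show betaZ 1 1 1 = 3 by decide]
  rw [T3]
  simp [Matrix.mul_fin_three, Matrix.trace_fin_three]
  ring

lemma base2 (ξ ω : ℂ) : Matrix.trace (T3 ξ ω ^ 2) = S 2 3 ξ ω := by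
  have htr : T3 ξ ω ^ 2 = T3 ξ ω*T3 ξ ω := by rw [pow_two]
  rw [htr, S]
  simp only [Finset.sum_range_succ, Finset.sum_range_zero, Nat.cast_zero, Nat.cast_one,
    Nat.cast_ofNat, show betaZ 2 0 0 = 1 by decide, show betaZ 2 0 1 = 2 by decide, show betaZ 2 0 2 = 0 by decide, show betaZ 2 1 0 = 2 by decide, show betaZ 2 1 1 = 8 by decide, show betaZ 2 1 2 = 0 by decide, show betaZ 2 2 0 = 0 by decide, show betaZ 2 2 1 = 0 by decide, show betaZ 2 2 2 = 3 by decide]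
  rw [T3]
  simp [Matrix.mul_fin_three, Matrix.trace_fin_three]
  ring

lemma base3 (ξ ω : ℂ) : Matrix.trace (T3 ξ ω ^ 3) = S 3 4 ξ ω := by
  have htr : T3 ξ ω ^ 3 = T3 ξ ω*T3 ξ ω*T3 ξ ω := by rw [pow_succ, pow_two]
  rw [htr, S]
  simp only [Finset.sum_range_succ, Finset.sum_range_zero, Nat.cast_zero, Nat.cast_one,
    Nat.cast_ofNat, show betaZ 3 0 0 = 1 by decide, show betaZ 3 0 1 = 3 by decide, show betaZ 3 0 2 = 0 by decide, show betaZ 3 0 3 = 0 by decide, show betaZ 3 1 0 = 3 by decide, show betaZ 3 1 1 = 15 by decide, show betaZ 3 1 2 = 9 by decide, show betaZ 3 1 3 = 0 by decide, show betaZ 3 2 0 = 0 by decide, show betaZ 3 2 1 = 9 by decide, show betaZ 3 2 2 = 21 by decide, show betaZ 3 2 3 = 0 by decide, show betaZ 3 3 0 = 0 by decide, show betaZ 3 3 1 = 0 by decide, show betaZ 3 3 2 = 0 by decide, show betaZ 3 3 3 = 3 by decide]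
  rw [T3]
  simp [Matrix.mul_fin_three, Matrix.trace_fin_three]
  ring
open Finset in
lemma step (k : ℕ) (hk : 1 ≤ k) (ξ ω : ℂ)
    (h0 : Matrix.trace (T3 ξ ω ^ k) = S k (k+1) ξ ω)
    (h1 : Matrix.trace (T3 ξ ω ^ (k+1)) = S (k+1) (k+2) ξ ω)
    (h2 : Matrix.trace (T3 ξ ω ^ (k+2)) = S (k+2) (k+3) ξ ω) :
    Matrix.trace (T3 ξ ω ^ (k+3)) = S (k+3) (k+4) ξ ω := by
  have pt : ∀ x y : ℕ, ((betaZ (k+3) (x:ℤ) (y:ℤ) : ℤ) : ℂ) * ξ^x * ω^y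
      = ((betaZ (k+2) (x:ℤ) (y:ℤ) : ℤ) : ℂ) * ξ^x * ω^y
      + (3:ℂ) * (((betaZ (k+2) ((x:ℤ)-1) ((y:ℤ)-1) : ℤ) : ℂ) * ξ^x * ω^y)
      + ((betaZ (k+1) ((x:ℤ)-1) ((y:ℤ)-1) : ℤ) : ℂ) * ξ^x * ω^y
      + (-3:ℂ) * (((betaZ (k+1) ((x:ℤ)-2) ((y:ℤ)-2) : ℤ) : ℂ) * ξ^x * ω^y)
      + ((betaZ (k+1) ((x:ℤ)-1) (y:ℤ) : ℤ) : ℂ) * ξ^x * ω^y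
      + ((betaZ (k+1) (x:ℤ) ((y:ℤ)-1) : ℤ) : ℂ) * ξ^x * ω^y
      + ((betaZ k ((x:ℤ)-1) ((y:ℤ)-1) : ℤ) : ℂ) * ξ^x * ω^y
      + (-2:ℂ) * (((betaZ k ((x:ℤ)-2) ((y:ℤ)-2) : ℤ) : ℂ) * ξ^x * ω^y)
      + ((betaZ k ((x:ℤ)-3) ((y:ℤ)-3) : ℤ) : ℂ) * ξ^x * ω^y := by
    intro x y
    have h := key k hk (x:ℤ) (y:ℤ)
    have hC := congrArg (fun z : ℤ => (z : ℂ)) h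
    push_cast at hC
    linear_combination ξ^x * ω^y * hC
  have hsplit : S (k+3) (k+4) ξ ω
      = S (k+2) (k+4) ξ ω
      + (3:ℂ) * (∑ x ∈ range (k+4), ∑ y ∈ range (k+4),
          ((betaZ (k+2) ((x:ℤ)-1) ((y:ℤ)-1) : ℤ) : ℂ) * ξ^x * ω^y)
      + (∑ x ∈ range (k+4), ∑ y ∈ range (k+4),
          ((betaZ (k+1) ((x:ℤ)-1) ((y:ℤ)-1) : ℤ) : ℂ) * ξ^x * ω^y)
      + (-3:ℂ) * (∑ x ∈ range (k+4), ∑ y ∈ range (k+4),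
          ((betaZ (k+1) ((x:ℤ)-2) ((y:ℤ)-2) : ℤ) : ℂ) * ξ^x * ω^y)
      + (∑ x ∈ range (k+4), ∑ y ∈ range (k+4),
          ((betaZ (k+1) ((x:ℤ)-1) (y:ℤ) : ℤ) : ℂ) * ξ^x * ω^y)
      + (∑ x ∈ range (k+4), ∑ y ∈ range (k+4),
          ((betaZ (k+1) (x:ℤ) ((y:ℤ)-1) : ℤ) : ℂ) * ξ^x * ω^y)
      + (∑ x ∈ range (k+4), ∑ y ∈ range (k+4),
          ((betaZ k ((x:ℤ)-1) ((y:ℤ)-1) : ℤ) : ℂ) * ξ^x * ω^y)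
      + (-2:ℂ) * (∑ x ∈ range (k+4), ∑ y ∈ range (k+4),
          ((betaZ k ((x:ℤ)-2) ((y:ℤ)-2) : ℤ) : ℂ) * ξ^x * ω^y)
      + (∑ x ∈ range (k+4), ∑ y ∈ range (k+4),
          ((betaZ k ((x:ℤ)-3) ((y:ℤ)-3) : ℤ) : ℂ) * ξ^x * ω^y) := by
    rw [S, Finset.sum_congr rfl (fun x _ => Finset.sum_congr rfl (fun y _ => pt x y))]
    simp only [Finset.sum_add_distrib, ← Finset.mul_sum]
    rw [← S]
  -- shift instances
  have A1 := S_shift (k+2) 1 1 (k+4) (by omega) (by omega) ξ ω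
  have A2 := S_shift (k+1) 1 1 (k+4) (by omega) (by omega) ξ ω
  have A3 := S_shift (k+1) 2 2 (k+4) (by omega) (by omega) ξ ω
  have A4 := S_shift (k+1) 1 0 (k+4) (by omega) (by omega) ξ ω
  have A5 := S_shift (k+1) 0 1 (k+4) (by omega) (by omega) ξ ω
  have A6 := S_shift k 1 1 (k+4) (by omega) (by omega) ξ ω
  have A7 := S_shift k 2 2 (k+4) (by omega) (by omega) ξ ω
  have A8 := S_shift k 3 3 (k+4) (by omega) (by omega) ξ ω
  norm_num at A1 A2 A3 A4 A5 A6 A7 A8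
  rw [hsplit, A1, A2, A3, A4, A5, A6, A7, A8]
  rw [trace_rec, h0, h1, h2,
      show S (k+2) (k+3) ξ ω = S (k+2) (k+4) ξ ω from (S_trunc (k+2) (k+4) (by omega) ξ ω).symm ▸ (S_trunc (k+2) (k+3) (by omega) ξ ω),
      show S (k+1) (k+2) ξ ω = S (k+1) (k+4) ξ ω from (S_trunc (k+1) (k+4) (by omega) ξ ω).symm ▸ (S_trunc (k+1) (k+2) (by omega) ξ ω),
      show S k (k+1) ξ ω = S k (k+4) ξ ω from (S_trunc k (k+4) (by omega) ξ ω).symm ▸ (S_trunc k (k+1) (by omega) ξ ω)]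
  ring

lemma trace_eq_S (k : ℕ) (hk : 1 ≤ k) (ξ ω : ℂ) :
    Matrix.trace (T3 ξ ω ^ k) = S k (k+1) ξ ω := by
  have all : ∀ n : ℕ,
      (∀ ξ ω : ℂ, Matrix.trace (T3 ξ ω ^ (n+1)) = S (n+1) (n+2) ξ ω)
      ∧ (∀ ξ ω : ℂ, Matrix.trace (T3 ξ ω ^ (n+2)) = S (n+2) (n+3) ξ ω)
      ∧ (∀ ξ ω : ℂ, Matrix.trace (T3 ξ ω ^ (n+3)) = S (n+3) (n+4) ξ ω) := by
    intro n
    induction n with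
    | zero => exact ⟨base1, base2, base3⟩
    | succ n ih =>
      refine ⟨ih.2.1, ih.2.2, ?_⟩
      intro ξ ω
      have := step (n+1) (by omega) ξ ω (ih.1 ξ ω) (ih.2.1 ξ ω) (ih.2.2 ξ ω)
      convert this using 3 <;> omega
  obtain ⟨m, rfl⟩ : ∃ m : ℕ, k = m + 1 := ⟨k - 1, by omega⟩
  exact (all m).1 ξ ω

/-- Closed-form expansion of the Rule 54 partition function `trace (T(ξ,ω)^k)` as a
polynomial in `ξ, ω` with (integral) coefficients `α_k(x,y)`. -/
theorem partition_function_expansion (k : ℕ) (hk : 1 ≤ k) :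
    (∀ x y : ℕ, x ≤ k → y ≤ k → ∃ m : ℤ, alphaQ k x y = (m : ℚ)) ∧
    (∀ ξ ω : ℂ,
      Matrix.trace (T3 ξ ω ^ k) =
        ∑ x ∈ Finset.range (k + 1), ∑ y ∈ Finset.range (k + 1),
          (alphaQ k x y : ℂ) * ξ ^ x * ω ^ y) := by
  constructor
  · intro x y _ _
    exact ⟨betaZ k x y, alphaQ_eq_betaZ k x y hk⟩
  · intro ξ ω
    rw [trace_eq_S k hk ξ ω, S]
    exact (Finset.sum_congr rfl fun x _ => Finset.sum_congr rfl fun y _ => by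
      rw [alphaQ_eq_betaZ k x y hk, Rat.cast_intCast]).symm

end Rule54
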